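/- arXiv:2310.03437 — 8 statements merged into one kernel-verified Lean document; each statement's English description precedes it below -/
import Mathlib

section
/- Let L ∈ GL(m, ℝ) have all eigenvalues of modulus strictly less than 1, and define L_ε(C) := {L(x) + y : x ∈ C, ‖y‖ ≤ ε} for nonempty compact C ⊆ ℝ^m. Then L_ε has a unique fixed point A in the space of nonempty compact subsets of ℝ^m, and L_ε^i(C) → A in the Hausdorff metric for every nonempty compact C. -/
noncomputable section

/-- All (complex) eigenvalues of the real matrix `M` have modulus less than 1. -/
def specLt1 {m : ℕ} (M : Matrix (Fin m) (Fin m) ℝ) : Prop :=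
  ∀ μ ∈ spectrum ℂ (M.map Complex.ofReal), ‖μ‖ < 1

/-- The set-valued map `L_ε(C) = {L(x) + y : x ∈ C, ‖y‖ ≤ ε}`. -/
def Leps {m : ℕ} (M : Matrix (Fin m) (Fin m) ℝ) (ε : ℝ)
    (C : Set (EuclideanSpace ℝ (Fin m))) : Set (EuclideanSpace ℝ (Fin m)) :=
  {z | ∃ x ∈ C, ∃ y : EuclideanSpace ℝ (Fin m), ‖y‖ ≤ ε ∧ z = Matrix.toEuclideanLin M x + y}

open Matrix Filter Metric Set TopologicalSpace Pointwise

section Aux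

variable {E : Type*} [NormedAddCommGroup E] [NormedSpace ℝ E]

/-- Hausdorff distance bound for images plus a common summand. -/
lemma aux_hd_le (S : E →L[ℝ] E) {s t : Set E} (B : Set E)
    (hs : IsCompact s) (hsne : s.Nonempty) (ht : IsCompact t) (htne : t.Nonempty) :
    hausdorffDist (S '' s + B) (S '' t + B) ≤ ‖S‖ * hausdorffDist s t := by
  have hfin : EMetric.hausdorffEdist s t ≠ ⊤ :=
    hausdorffEdist_ne_top_of_nonempty_of_bounded hsne htne hs.isBounded ht.isBounded
  have hr : 0 ≤ ‖S‖ * hausdorffDist s t :=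
    mul_nonneg (norm_nonneg _) hausdorffDist_nonneg
  have key : ∀ (u v : Set E), IsCompact v → v.Nonempty →
      EMetric.hausdorffEdist u v ≠ ⊤ →
      ∀ z ∈ S '' u + B, ∃ w ∈ S '' v + B, dist z w ≤ ‖S‖ * hausdorffDist u v := by
    intro u v hv hvne hfin z hz
    obtain ⟨a, ha, b, hb, rfl⟩ := Set.mem_add.1 hz
    obtain ⟨x, hx, rfl⟩ := ha
    obtain ⟨y, hy, hxy⟩ := hv.exists_infDist_eq_dist hvne x
    refine ⟨S y + b, Set.add_mem_add (Set.mem_image_of_mem _ hy) hb, ?_⟩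
    have : dist (S x + b) (S y + b) = ‖S (x - y)‖ := by
      rw [dist_eq_norm]; congr 1
      simp [map_sub]
    rw [this]
    calc ‖S (x - y)‖ ≤ ‖S‖ * ‖x - y‖ := S.le_opNorm _
      _ = ‖S‖ * dist x y := by rw [dist_eq_norm]
      _ ≤ ‖S‖ * hausdorffDist u v := by
          refine mul_le_mul_of_nonneg_left ?_ (norm_nonneg _)
          rw [← hxy]
          exact infDist_le_hausdorffDist_of_mem hx hfin
  refine hausdorffDist_le_of_mem_dist hr (key s t ht htne hfin) ?_
  intro z hz
  obtain ⟨w, hw, hd⟩ := key t s hs hsne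
    (by rw [show EMetric.hausdorffEdist t s = EMetric.hausdorffEdist s t from EMetric.hausdorffEdist_comm]; exact hfin) z hz
  exact ⟨w, hw, hd.trans (by rw [hausdorffDist_comm])⟩

end Aux

/-- `L_ε` has a unique nonempty compact fixed point `A`, which attracts all nonempty compact
sets under iteration, in the Hausdorff metric. -/
theorem stmt2 {m : ℕ} (M : Matrix (Fin m) (Fin m) ℝ) (hdet : IsUnit M.det)
    (hspec : specLt1 M) (ε : ℝ) (hε : 0 < ε) :
    ∃ A : Set (EuclideanSpace ℝ (Fin m)), A.Nonempty ∧ IsCompact A ∧ Leps M ε A = A ∧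
      (∀ A' : Set (EuclideanSpace ℝ (Fin m)),
        A'.Nonempty → IsCompact A' → Leps M ε A' = A' → A' = A) ∧
      (∀ C : Set (EuclideanSpace ℝ (Fin m)), C.Nonempty → IsCompact C →
        Filter.Tendsto (fun i => Metric.hausdorffDist ((Leps M ε)^[i] C) A)
          Filter.atTop (nhds 0)) := by
  classical
  set E := EuclideanSpace ℝ (Fin m)
  set T : E →L[ℝ] E := toEuclideanCLM (n := Fin m) (𝕜 := ℝ) M with hT
  -- Leps as image + ball
  have hLeps : ∀ C : Set E, Leps M ε C = T '' C + Metric.closedBall 0 ε := by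
    intro C
    ext z
    constructor
    · rintro ⟨x, hx, y, hy, rfl⟩
      refine Set.add_mem_add (Set.mem_image_of_mem _ hx) (mem_closedBall_zero_iff.2 hy)
    · rintro ⟨_, ⟨x, hx, rfl⟩, y, hy, rfl⟩
      exact ⟨x, hx, y, mem_closedBall_zero_iff.1 hy, rfl⟩
  -- complex side, Gelfand
  set T' : EuclideanSpace ℂ (Fin m) →L[ℂ] EuclideanSpace ℂ (Fin m) :=
    toEuclideanCLM (n := Fin m) (𝕜 := ℂ) (M.map Complex.ofReal) with hT'
  have hspecT' : spectralRadius ℂ T' < 1 := by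
    have hEq : spectrum ℂ T' = spectrum ℂ (M.map Complex.ofReal) :=
      AlgEquiv.spectrum_eq (toEuclideanCLM (n := Fin m) (𝕜 := ℂ) : _ ≃⋆ₐ[ℂ] _) _
    rcases (spectrum ℂ T').eq_empty_or_nonempty with he | hne
    · rw [spectralRadius, he]; simp
    · refine spectrum.spectralRadius_lt_of_forall_lt_of_nonempty hne fun z hz => ?_
      have := hspec z (hEq ▸ hz)
      simpa [← NNReal.coe_lt_coe] using this
  obtain ⟨n, hn1, hTn'⟩ : ∃ n, 1 ≤ n ∧ ‖T' ^ n‖₊ < 1 := by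
    have hG := spectrum.pow_nnnorm_pow_one_div_tendsto_nhds_spectralRadius T'
    have hev : ∀ᶠ n : ℕ in atTop, ((‖T' ^ n‖₊ : ENNReal) ^ (1 / (n:ℝ))) < 1 :=
      hG.eventually_lt_const hspecT'
    obtain ⟨n, hn1, hn⟩ := (hev.and (eventually_ge_atTop 1)).exists
    refine ⟨n, hn, ?_⟩
    by_contra hc
    push_neg at hc
    have : (1 : ENNReal) ≤ (‖T' ^ n‖₊ : ENNReal) ^ (1 / (n:ℝ)) := by
      calc (1:ENNReal) = 1 ^ (1/(n:ℝ)) := by rw [ENNReal.one_rpow]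
      _ ≤ _ := ENNReal.rpow_le_rpow (by exact_mod_cast hc) (by positivity)
    exact absurd hn1 (not_lt.2 this)
  -- real norm bound
  have hreal : ∀ (N : Matrix (Fin m) (Fin m) ℝ) (x : E),
      ‖toEuclideanCLM (n := Fin m) (𝕜 := ℝ) N x‖
        ≤ ‖toEuclideanCLM (n := Fin m) (𝕜 := ℂ) (N.map Complex.ofReal)‖ * ‖x‖ := by
    intro N x
    set x' : EuclideanSpace ℂ (Fin m) := (WithLp.equiv 2 _).symm (fun i => (x i : ℂ)) with hx'
    have hxn : ‖x'‖ = ‖x‖ := by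
      rw [EuclideanSpace.norm_eq, EuclideanSpace.norm_eq]
      congr 1
      refine Finset.sum_congr rfl fun i _ => ?_
      show ‖((x i : ℂ))‖ ^ 2 = ‖x i‖ ^ 2
      rw [Complex.norm_real]
    have happ : ‖toEuclideanCLM (n := Fin m) (𝕜 := ℝ) N x‖
        = ‖toEuclideanCLM (n := Fin m) (𝕜 := ℂ) (N.map Complex.ofReal) x'‖ := by
      rw [EuclideanSpace.norm_eq, EuclideanSpace.norm_eq]
      congr 1
      refine Finset.sum_congr rfl fun i _ => ?_
      have h1 : (toEuclideanCLM (n := Fin m) (𝕜 := ℝ) N x) i = N.mulVec x i := by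
        have := ofLp_toEuclideanCLM (𝕜 := ℝ) N x
        exact congrFun this i
      have h2 : (toEuclideanCLM (n := Fin m) (𝕜 := ℂ) (N.map Complex.ofReal) x') i
          = (N.map Complex.ofReal).mulVec (fun j => (x j : ℂ)) i := by
        have := ofLp_toEuclideanCLM (𝕜 := ℂ) (N.map Complex.ofReal) x'
        exact congrFun this i
      rw [h1, h2]
      have : (N.map Complex.ofReal).mulVec (fun j => (x j : ℂ)) i
          = ((N.mulVec x i : ℝ) : ℂ) := by
        simp [Matrix.mulVec, dotProduct, Matrix.map_apply]
      rw [this, Complex.norm_real]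
    rw [happ, ← hxn]
    exact (toEuclideanCLM (n := Fin m) (𝕜 := ℂ) (N.map Complex.ofReal)).le_opNorm x'
  -- T^n map identities and norm bound
  have hTpow : ∀ k : ℕ, T ^ k = toEuclideanCLM (n := Fin m) (𝕜 := ℝ) (M ^ k) := by
    intro k; rw [hT, map_pow]
  have hTn : ‖T ^ n‖ < 1 := by
    have hmap : (M.map Complex.ofReal) ^ n = (M ^ n).map Complex.ofReal := by
      have : M.map Complex.ofReal = (Complex.ofRealHom : ℝ →+* ℂ).mapMatrix M := rfl
      rw [this, ← map_pow]; rfl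
    have hle : ‖T ^ n‖ ≤ ‖T' ^ n‖ := by
      rw [hTpow n, hT', ← map_pow, hmap]
      exact ContinuousLinearMap.opNorm_le_bound _ (norm_nonneg _) (hreal (M ^ n))
    calc ‖T ^ n‖ ≤ ‖T' ^ n‖ := hle
      _ < 1 := by exact_mod_cast hTn'
  -- setup space of nonempty compacts
  haveI : Nonempty (NonemptyCompacts E) :=
    ⟨⟨⟨{0}, isCompact_singleton⟩, Set.singleton_nonempty 0⟩⟩
  set F : NonemptyCompacts E → NonemptyCompacts E := fun K =>
    ⟨⟨T '' K + Metric.closedBall 0 ε,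
      (K.isCompact.image T.continuous).add (isCompact_closedBall 0 ε)⟩,
      Set.add_nonempty.2 ⟨K.nonempty.image _, ⟨0, mem_closedBall_self hε.le⟩⟩⟩ with hF
  have hFcar : ∀ K : NonemptyCompacts E, (F K : Set E) = Leps M ε K := by
    intro K; rw [hLeps]; rfl
  have hFiter : ∀ (i : ℕ) (K : NonemptyCompacts E),
      ((F^[i] K : NonemptyCompacts E) : Set E) = (Leps M ε)^[i] (K : Set E) := by
    intro i
    induction i with
    | zero => intro K; simp
    | succ i ih =>
      intro K
      rw [Function.iterate_succ_apply, Function.iterate_succ_apply, ih, ← hFcar]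
  -- Minkowski structure of iterates
  have hstruct : ∀ i : ℕ, ∃ B : Set E, B.Nonempty ∧ IsCompact B ∧
      ∀ C : Set E, (Leps M ε)^[i] C = (T ^ i) '' C + B := by
    intro i
    induction i with
    | zero =>
      refine ⟨{0}, Set.singleton_nonempty 0, isCompact_singleton, fun C => ?_⟩
      simp [Set.add_singleton]
    | succ i ih =>
      obtain ⟨B, hBne, hBc, hB⟩ := ih
      refine ⟨(T ^ i) '' Metric.closedBall 0 ε + B,
        Set.add_nonempty.2 ⟨(Metric.nonempty_closedBall.2 hε.le).image _, hBne⟩,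
        ((isCompact_closedBall 0 ε).image (T ^ i).continuous).add hBc, fun C => ?_⟩
      rw [Function.iterate_succ_apply, hB, hLeps]
      rw [Set.image_add]
      rw [← Set.image_comp]
      have hco : (T ^ i) ∘ T = ⇑(T ^ (i + 1)) := by
        ext x
        rw [pow_succ]
        rfl
      rw [hco, add_assoc]
  -- contraction
  set K1 : NNReal := ‖T ^ n‖₊ with hK1
  have hK1lt : K1 < 1 := by
    have h : ((‖T ^ n‖₊ : NNReal) : ℝ) < 1 := by rw [coe_nnnorm]; exact hTn
    rw [hK1]; exact_mod_cast h
  have hlip : ∀ (i : ℕ) (K K' : NonemptyCompacts E),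
      dist (F^[i] K) (F^[i] K') ≤ ‖T ^ i‖ * dist K K' := by
    intro i K K'
    obtain ⟨B, hBne, hBc, hB⟩ := hstruct i
    rw [NonemptyCompacts.dist_eq, NonemptyCompacts.dist_eq, hFiter, hFiter, hB, hB]
    exact aux_hd_le (T ^ i) B K.isCompact K.nonempty K'.isCompact K'.nonempty
  have hG : ContractingWith K1 (F^[n]) := by
    refine ⟨hK1lt, LipschitzWith.of_dist_le_mul fun K K' => ?_⟩
    rw [hK1, coe_nnnorm]
    exact hlip n K K'
  -- fixed point
  set A₀ : NonemptyCompacts E := hG.fixedPoint (F^[n]) with hA₀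
  have hfixG : F^[n] A₀ = A₀ := hG.fixedPoint_isFixedPt
  have hfixF : F A₀ = A₀ := by
    have hcomm : F^[n] (F A₀) = F (F^[n] A₀) := by
      rw [← Function.iterate_succ_apply, Function.iterate_succ_apply']
    have : Function.IsFixedPt (F^[n]) (F A₀) := by
      rw [Function.IsFixedPt, hcomm, hfixG]
    exact (hG.fixedPoint_unique this).trans hA₀.symm
  -- note: rewrite hfixF properly below
  refine ⟨(A₀ : Set E), A₀.nonempty, A₀.isCompact, ?_, ?_, ?_⟩
  · rw [← hFcar, hfixF]
  · intro A' hne hc hfix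
    set K' : NonemptyCompacts E := ⟨⟨A', hc⟩, hne⟩ with hK'
    have : F K' = K' := by
      ext1
      rw [hFcar]
      exact hfix
    have hK'fix : Function.IsFixedPt (F^[n]) K' := (Function.IsFixedPt.iterate this n)
    have := hG.fixedPoint_unique hK'fix
    exact congrArg (fun (X : NonemptyCompacts E) => (X : Set E)) this
  · intro C hne hc
    set K : NonemptyCompacts E := ⟨⟨C, hc⟩, hne⟩ with hK
    have hdi : ∀ i, Metric.hausdorffDist ((Leps M ε)^[i] C) (A₀ : Set E)
        = dist (F^[i] K) A₀ := by
      intro i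
      rw [NonemptyCompacts.dist_eq, hFiter]
      rfl
    simp only [hdi]
    -- bound: dist (F^[i] K) A₀ ≤ D * K1 ^ (i / n)
    have hn0 : 0 < n := hn1
    set D : ℝ := (Finset.range n).sup' (by simp [hn0.ne']) (fun r => dist (F^[r] K) A₀) with hD
    have hbound : ∀ i, dist (F^[i] K) A₀ ≤ D * (K1 : ℝ) ^ (i / n) := by
      intro i
      have hdecomp : F^[i] K = (F^[n])^[i / n] (F^[i % n] K) := by
        conv_lhs => rw [← Nat.div_add_mod i n]
        rw [Function.iterate_add_apply, Function.iterate_mul]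
      have hlipq : dist ((F^[n])^[i / n] (F^[i % n] K)) A₀
          ≤ (K1 : ℝ) ^ (i / n) * dist (F^[i % n] K) A₀ := by
        have := (hG.toLipschitzWith.iterate (i / n)).dist_le_mul (F^[i % n] K) A₀
        rw [Function.IsFixedPt.iterate hfixG (i / n)] at this
        simpa using this
      rw [hdecomp]
      refine hlipq.trans ?_
      rw [mul_comm]
      refine mul_le_mul_of_nonneg_right ?_ (by positivity)
      rw [hD]
      exact Finset.le_sup' (fun r => dist (F^[r] K) A₀) (Finset.mem_range.2 (Nat.mod_lt i hn0))
    refine squeeze_zero (fun i => dist_nonneg) hbound ?_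
    have h1 : Tendsto (fun q : ℕ => D * (K1 : ℝ) ^ q) atTop (nhds 0) := by
      rw [← mul_zero D]
      exact (tendsto_pow_atTop_nhds_zero_of_lt_one K1.coe_nonneg
        (by exact_mod_cast hK1lt)).const_mul D
    have h2 : Tendsto (fun i : ℕ => i / n) atTop atTop :=
      tendsto_atTop_atTop.2 fun b => ⟨b * n, fun a ha => (Nat.le_div_iff_mul_le hn0).2 ha⟩
    exact h1.comp h2
end
end

section
/- If L ∈ GL(m, ℝ) has a real eigenvalue λ with |λ| > 1, then the set-valued map L_ε(C) := {L(x) + y : x ∈ C, ‖y‖ ≤ ε} has no fixed point among nonempty compact subsets of ℝ^m. -/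
noncomputable section

/-- If `L` has a real eigenvalue `λ` with `|λ| > 1`, then `L_ε` has no nonempty compact
fixed point. -/
theorem stmt3 {m : ℕ} (M : Matrix (Fin m) (Fin m) ℝ) (hdet : IsUnit M.det) (lam : ℝ)
    (hlam : Module.End.HasEigenvalue
      (Matrix.toEuclideanLin M : Module.End ℝ (EuclideanSpace ℝ (Fin m))) lam)
    (h1 : 1 < |lam|) (ε : ℝ) (hε : 0 < ε) :
    ¬ ∃ A : Set (EuclideanSpace ℝ (Fin m)), A.Nonempty ∧ IsCompact A ∧ Leps M ε A = A := by
  rintro ⟨A, ⟨a0, ha0⟩, hAc, hfix⟩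
  set f := (Matrix.toEuclideanLin M : Module.End ℝ (EuclideanSpace ℝ (Fin m))) with hf
  obtain ⟨v, hv⟩ := hlam.exists_hasEigenvector
  have hv0 : v ≠ 0 := hv.right
  set e : EuclideanSpace ℝ (Fin m) := ‖v‖⁻¹ • v with he
  have hne : ‖e‖ = 1 := by
    rw [he, norm_smul, norm_inv, norm_norm, inv_mul_cancel₀ (norm_ne_zero_iff.mpr hv0)]
  have hfe : f e = lam • e := by
    rw [he, map_smul, hv.apply_eq_smul, smul_comm]
  have hstep : ∀ x ∈ A, ∀ y : EuclideanSpace ℝ (Fin m), ‖y‖ ≤ ε → f x + y ∈ A := by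
    intro x hx y hy
    rw [← hfix]
    exact ⟨x, hx, y, hy, rfl⟩
  have key : ∀ n : ℕ, ∃ u ∈ A, ∃ w ∈ A, ∃ c : ℝ,
      (n : ℝ) * (2 * ε) ≤ |c| ∧ u - w = c • e := by
    intro n
    induction n with
    | zero => exact ⟨a0, ha0, a0, ha0, 0, by simp, by simp⟩
    | succ n ih =>
      obtain ⟨u, hu, w, hw, c, hc, hcw⟩ := ih
      set s : ℝ := if 0 ≤ lam * c then 1 else -1 with hs
      have hsabs : |s| = 1 := by rw [hs]; split <;> simp
      have hy : ‖(s * ε) • e‖ ≤ ε := by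
        rw [norm_smul, hne, mul_one, Real.norm_eq_abs, abs_mul, hsabs, one_mul,
          abs_of_pos hε]
      have hy' : ‖(-(s * ε)) • e‖ ≤ ε := by rwa [norm_smul, norm_neg, ← norm_smul]
      refine ⟨f u + (s * ε) • e, hstep u hu _ hy,
        f w + (-(s * ε)) • e, hstep w hw _ hy',
        lam * c + 2 * (s * ε), ?_, ?_⟩
      · have habs : |lam * c + 2 * (s * ε)| = |lam * c| + 2 * ε := by
          rw [hs]
          split_ifs with h
          · rw [abs_of_nonneg h, abs_of_nonneg (by nlinarith)]; ring
          · push_neg at h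
            rw [abs_of_neg h, abs_of_nonpos (by nlinarith)]; ring
        have hlam1 : 1 ≤ |lam| := le_of_lt h1
        have hcpos : (0:ℝ) ≤ |c| := abs_nonneg c
        rw [habs, abs_mul]
        push_cast
        nlinarith
      · have : f u + (s * ε) • e - (f w + (-(s * ε)) • e)
            = f (u - w) + (2 * (s * ε)) • e := by
          rw [map_sub]
          module
        rw [this, hcw, map_smul, hfe, smul_smul, ← add_smul, mul_comm c lam]
  obtain ⟨R, hR⟩ := isBounded_iff_forall_norm_le.mp hAc.isBounded
  obtain ⟨n, hn⟩ := exists_nat_gt ((2 * R) / (2 * ε))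
  obtain ⟨u, hu, w, hw, c, hc, hcw⟩ := key n
  have h2e : (0:ℝ) < 2 * ε := by linarith
  have hbig : 2 * R < (n : ℝ) * (2 * ε) := (div_lt_iff₀ h2e).mp hn
  have hnorm : ‖u - w‖ = |c| := by
    rw [hcw, norm_smul, hne, mul_one, Real.norm_eq_abs]
  have : ‖u - w‖ ≤ 2 * R := by
    calc ‖u - w‖ ≤ ‖u‖ + ‖w‖ := norm_sub_le u w
    _ ≤ R + R := add_le_add (hR u hu) (hR w hw)
    _ = 2 * R := by ring
  rw [hnorm] at this
  linarith
end
end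

section
/- If L ∈ GL(m, ℝ) has a real eigenvalue λ with |λ| = 1, then the set-valued map L_ε(C) := {L(x) + y : x ∈ C, ‖y‖ ≤ ε} has no fixed point among nonempty compact subsets of ℝ^m. In particular, for x in the eigenspace of λ with x ≠ 0, the iterate L_ε^i({x}) contains a point at distance at least iε from the origin for every i ∈ ℕ. -/
noncomputable section

open RealInnerProductSpace Matrix

/-- Existence of a left eigenvector. -/
lemma aux_left_eigen {m : ℕ} (M : Matrix (Fin m) (Fin m) ℝ) (lam : ℝ)
    (hlam : Module.End.HasEigenvalue
      (Matrix.toEuclideanLin M : Module.End ℝ (EuclideanSpace ℝ (Fin m))) lam) :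
    ∃ w : EuclideanSpace ℝ (Fin m), w ≠ 0 ∧ Matrix.toEuclideanLin Mᵀ w = lam • w := by
  obtain ⟨v, hv⟩ := hlam.exists_hasEigenvector
  have hv0 : v ≠ 0 := hv.right
  have hveq : Matrix.toEuclideanLin M v = lam • v := hv.apply_eq_smul
  have hmv : (M - lam • 1) *ᵥ (WithLp.equiv 2 _ v) = 0 := by
    have := congrArg (WithLp.equiv 2 (Fin m → ℝ)) hveq
    rw [show WithLp.equiv 2 (Fin m → ℝ) (Matrix.toEuclideanLin M v) = Matrix.toLin' M (WithLp.equiv 2 _ v) from rfl] at this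
    simp only [Matrix.sub_mulVec, Matrix.smul_mulVec, Matrix.one_mulVec]
    rw [show Matrix.toLin' M (WithLp.equiv 2 _ v) = M *ᵥ (WithLp.equiv 2 _ v) from rfl] at this
    rw [this]
    simp [sub_eq_zero]
  have hdet0 : (M - lam • 1).det = 0 := by
    rw [← Matrix.exists_mulVec_eq_zero_iff]
    exact ⟨_, by simpa using hv0, hmv⟩
  have hdetT : (Mᵀ - lam • 1).det = 0 := by
    rw [show Mᵀ - lam • 1 = (M - lam • 1)ᵀ by simp [Matrix.transpose_smul], Matrix.det_transpose]
    exact hdet0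
  obtain ⟨w', hw'0, hw'⟩ := (Matrix.exists_mulVec_eq_zero_iff).2 hdetT
  refine ⟨(WithLp.equiv 2 _).symm w', by simpa using hw'0, ?_⟩
  rw [show Matrix.toEuclideanLin Mᵀ ((WithLp.equiv 2 _).symm w') = (WithLp.equiv 2 _).symm (Mᵀ *ᵥ w') from rfl]
  rw [Matrix.sub_mulVec, Matrix.smul_mulVec, Matrix.one_mulVec, sub_eq_zero] at hw'
  rw [hw']
  rfl

/-- One growth step. -/
lemma aux_step {m : ℕ} (M : Matrix (Fin m) (Fin m) ℝ) (lam : ℝ) (h1 : |lam| = 1)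
    (ε : ℝ) (hε : 0 < ε) (w : EuclideanSpace ℝ (Fin m)) (hw0 : w ≠ 0)
    (hw : Matrix.toEuclideanLin Mᵀ w = lam • w)
    (C : Set (EuclideanSpace ℝ (Fin m))) (a : EuclideanSpace ℝ (Fin m)) (ha : a ∈ C) :
    ∃ z ∈ Leps M ε C, |⟪a, w⟫| + ε * ‖w‖ ≤ |⟪z, w⟫| := by
  have hwn : (0:ℝ) < ‖w‖ := norm_pos_iff.2 hw0
  set L := Matrix.toEuclideanLin M with hL
  have hadj : ⟪L a, w⟫ = lam * ⟪a, w⟫ := by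
    have hMH : Mᴴ = Mᵀ := by ext i j; simp [Matrix.conjTranspose_apply]
    have h2 : Matrix.toEuclideanLin Mᴴ = LinearMap.adjoint L :=
      Matrix.toEuclideanLin_conjTranspose_eq_adjoint M
    have : ⟪a, LinearMap.adjoint L w⟫ = ⟪L a, w⟫ := LinearMap.adjoint_inner_right L a w
    rw [← this, ← h2, hMH, hw, real_inner_smul_right]
  set s : ℝ := if 0 ≤ lam * ⟪a, w⟫ then 1 else -1 with hs
  have hsabs : |s| = 1 := by rw [hs]; split <;> simp
  set y : EuclideanSpace ℝ (Fin m) := (s * (ε / ‖w‖)) • w with hy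
  have hyn : ‖y‖ = ε := by
    rw [hy, norm_smul, Real.norm_eq_abs, abs_mul, hsabs, one_mul,
      abs_of_pos (div_pos hε hwn), div_mul_cancel₀ _ (ne_of_gt hwn)]
  refine ⟨L a + y, ⟨a, ha, y, le_of_eq hyn, rfl⟩, ?_⟩
  have hiy : ⟪y, w⟫ = s * (ε * ‖w‖) := by
    rw [hy, real_inner_smul_left, real_inner_self_eq_norm_sq]
    field_simp
  rw [inner_add_left, hadj, hiy]
  have habs : |lam * ⟪a, w⟫| = |⟪a, w⟫| := by rw [abs_mul, h1, one_mul]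
  have ht : (0:ℝ) < ε * ‖w‖ := mul_pos hε hwn
  rw [hs]
  split
  · rename_i h
    rw [one_mul, abs_of_nonneg (by positivity : (0:ℝ) ≤ lam * ⟪a,w⟫ + ε * ‖w‖)]
    rw [← habs, abs_of_nonneg h]
  · rename_i h
    push_neg at h
    rw [neg_one_mul, abs_of_nonpos (by linarith : lam * ⟪a,w⟫ + -(ε * ‖w‖) ≤ 0)]
    rw [← habs, abs_of_neg h]
    ring_nf
    linarith

/-- If `L` has a real eigenvalue `λ` with `|λ| = 1`, then `L_ε` has no nonempty compact fixed
point; moreover, for a nonzero eigenvector `x` of `λ`, the `i`-th iterate `L_ε^i({x})`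
contains a point at distance at least `i·ε` from the origin. -/
theorem stmt4 {m : ℕ} (M : Matrix (Fin m) (Fin m) ℝ) (hdet : IsUnit M.det) (lam : ℝ)
    (hlam : Module.End.HasEigenvalue
      (Matrix.toEuclideanLin M : Module.End ℝ (EuclideanSpace ℝ (Fin m))) lam)
    (h1 : |lam| = 1) (ε : ℝ) (hε : 0 < ε) :
    (¬ ∃ A : Set (EuclideanSpace ℝ (Fin m)), A.Nonempty ∧ IsCompact A ∧ Leps M ε A = A) ∧
    (∀ x : EuclideanSpace ℝ (Fin m), x ≠ 0 → Matrix.toEuclideanLin M x = lam • x →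
      ∀ i : ℕ, ∃ z ∈ (Leps M ε)^[i] {x}, (i : ℝ) * ε ≤ ‖z‖) := by
  obtain ⟨w, hw0, hw⟩ := aux_left_eigen M lam hlam
  have hwn : (0:ℝ) < ‖w‖ := norm_pos_iff.2 hw0
  constructor
  · rintro ⟨A, hne, hcomp, hfix⟩
    obtain ⟨R, hR⟩ := hcomp.isBounded.subset_closedBall 0
    have key : ∀ i : ℕ, ∃ a ∈ A, (i : ℝ) * (ε * ‖w‖) ≤ |⟪a, w⟫| := by
      intro i
      induction i with
      | zero => exact ⟨hne.some, hne.some_mem, by simp [abs_nonneg]⟩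
      | succ n ih =>
        obtain ⟨a, ha, hab⟩ := ih
        obtain ⟨z, hz, hzb⟩ := aux_step M lam h1 ε hε w hw0 hw A a ha
        refine ⟨z, by rwa [hfix] at hz, ?_⟩
        push_cast
        linarith
    obtain ⟨i, hi⟩ := exists_nat_gt (R / ε)
    obtain ⟨a, ha, hab⟩ := key i
    have h2 : |⟪a, w⟫| ≤ R * ‖w‖ := by
      have h3 : ‖a‖ ≤ R := by simpa using hR ha
      calc |⟪a, w⟫| ≤ ‖a‖ * ‖w‖ := abs_real_inner_le_norm a w
        _ ≤ R * ‖w‖ := by nlinarith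
    have h4 : (i : ℝ) * ε ≤ R := by
      have := hab.trans h2
      rw [show (i:ℝ) * (ε * ‖w‖) = ((i:ℝ) * ε) * ‖w‖ by ring] at this
      exact le_of_mul_le_mul_right this hwn
    rw [div_lt_iff₀ hε] at hi
    linarith
  · intro x hx0 hxeig i
    have key : ∀ i : ℕ, ∃ z ∈ (Leps M ε)^[i] {x}, (i : ℝ) * (ε * ‖w‖) ≤ |⟪z, w⟫| := by
      intro i
      induction i with
      | zero => exact ⟨x, by simp, by simp [abs_nonneg]⟩
      | succ n ih =>
        obtain ⟨z, hz, hzb⟩ := ih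
        obtain ⟨z', hz', hz'b⟩ := aux_step M lam h1 ε hε w hw0 hw _ z hz
        refine ⟨z', by rw [Function.iterate_succ_apply']; exact hz', ?_⟩
        push_cast
        linarith
    obtain ⟨z, hz, hzb⟩ := key i
    refine ⟨z, hz, ?_⟩
    have h2 : |⟪z, w⟫| ≤ ‖z‖ * ‖w‖ := abs_real_inner_le_norm z w
    have := hzb.trans h2
    rw [show (i:ℝ) * (ε * ‖w‖) = ((i:ℝ) * ε) * ‖w‖ by ring] at this
    exact le_of_mul_le_mul_right this hwn
end
end

section
/- Let L ∈ GL(m, ℝ) have all eigenvalues of modulus less than 1 and let A be the unique compact fixed point of L_ε(C) := {L(x) + y : x ∈ C, ‖y‖ ≤ ε}. Then A is convex. -/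
noncomputable section

open Set Metric Filter Pointwise
open scoped ENNReal NNReal

/-- Complexification controls the real operator norm. -/
lemma norm_toEuclideanLin_le {m : ℕ} (P : Matrix (Fin m) (Fin m) ℝ)
    (v : EuclideanSpace ℝ (Fin m)) :
    ‖Matrix.toEuclideanLin P v‖
      ≤ ‖Matrix.toEuclideanCLM (𝕜 := ℂ) (P.map Complex.ofReal)‖ * ‖v‖ := by
  classical
  set vc : EuclideanSpace ℂ (Fin m) := (WithLp.equiv 2 _).symm fun i => ((v i : ℝ) : ℂ) with hvc
  have hclm : ∀ (N : Matrix (Fin m) (Fin m) ℂ) (x : EuclideanSpace ℂ (Fin m)),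
      Matrix.toEuclideanCLM (𝕜 := ℂ) N x = Matrix.toEuclideanLin N x := fun N x => rfl
  have hnorm : ‖vc‖ = ‖v‖ := by
    rw [EuclideanSpace.norm_eq, EuclideanSpace.norm_eq]
    congr 1
    refine Finset.sum_congr rfl fun i _ => ?_
    simp [hvc]
  have happ : Matrix.toEuclideanCLM (𝕜 := ℂ) (P.map Complex.ofReal) vc
      = (WithLp.equiv 2 _).symm fun i => ((Matrix.toEuclideanLin P v i : ℝ) : ℂ) := by
    rw [hclm]
    apply (WithLp.equiv 2 _).injective
    funext i
    simp only [hvc, Matrix.toEuclideanLin_apply, Equiv.apply_symm_apply,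
      Matrix.mulVec, dotProduct, Matrix.map_apply, WithLp.equiv_symm_apply,
      WithLp.equiv_apply, WithLp.ofLp_toLp]
    push_cast
    rfl
  have hnorm2 : ‖Matrix.toEuclideanCLM (𝕜 := ℂ) (P.map Complex.ofReal) vc‖
      = ‖Matrix.toEuclideanLin P v‖ := by
    rw [happ, EuclideanSpace.norm_eq, EuclideanSpace.norm_eq]
    congr 1
    refine Finset.sum_congr rfl fun i _ => ?_
    simp
  calc ‖Matrix.toEuclideanLin P v‖
      = ‖Matrix.toEuclideanCLM (𝕜 := ℂ) (P.map Complex.ofReal) vc‖ := hnorm2.symm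
    _ ≤ ‖Matrix.toEuclideanCLM (𝕜 := ℂ) (P.map Complex.ofReal)‖ * ‖vc‖ :=
        (Matrix.toEuclideanCLM (𝕜 := ℂ) (P.map Complex.ofReal)).le_opNorm vc
    _ = ‖Matrix.toEuclideanCLM (𝕜 := ℂ) (P.map Complex.ofReal)‖ * ‖v‖ := by rw [hnorm]

/-- The (unique) nonempty compact fixed point of `L_ε` is convex. -/
theorem stmt7 {m : ℕ} (M : Matrix (Fin m) (Fin m) ℝ) (hdet : IsUnit M.det)
    (hspec : specLt1 M) (ε : ℝ) (hε : 0 < ε) (A : Set (EuclideanSpace ℝ (Fin m)))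
    (hAne : A.Nonempty) (hAcomp : IsCompact A) (hAfix : Leps M ε A = A) :
    Convex ℝ A := by
  classical
  set g : EuclideanSpace ℝ (Fin m) →L[ℝ] EuclideanSpace ℝ (Fin m) :=
    Matrix.toEuclideanCLM (𝕜 := ℝ) M with hg
  have hgapply : ∀ x, g x = Matrix.toEuclideanLin M x := fun x => rfl
  set B := Metric.closedBall (0 : EuclideanSpace ℝ (Fin m)) ε with hB
  -- `Leps` is a Minkowski sum
  have hLeps : ∀ C, Leps M ε C = ⇑g '' C + B := by
    intro C
    ext z
    simp only [Leps, Set.mem_setOf_eq, Set.mem_add, Set.mem_image, hB, Metric.mem_closedBall,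
      dist_zero_right]
    constructor
    · rintro ⟨x, hx, y, hy, rfl⟩
      exact ⟨_, ⟨x, hx, rfl⟩, y, hy, by rw [hgapply]⟩
    · rintro ⟨_, ⟨x, hx, rfl⟩, y, hy, rfl⟩
      exact ⟨x, hx, y, hy, by rw [hgapply]⟩
  -- iterated error sets
  let S : ℕ → Set (EuclideanSpace ℝ (Fin m)) :=
    fun n => Nat.rec ({0} : Set (EuclideanSpace ℝ (Fin m))) (fun _ Sn => ⇑g '' Sn + B) n
  have hS0 : S 0 = {0} := rfl
  have hSsucc : ∀ n, S (n + 1) = ⇑g '' S n + B := fun n => rfl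
  have key : ∀ C, Leps M ε C = C → ∀ n, ⇑(g ^ n) '' C + S n = C := by
    intro C hC n
    induction n with
    | zero => simp [hS0, pow_zero]
    | succ n ih =>
      have himg : ⇑(g ^ (n + 1)) '' C = ⇑g '' (⇑(g ^ n) '' C) := by
        rw [← Set.image_comp]
        congr 1
        funext x
        simp [pow_succ', ContinuousLinearMap.mul_apply]
      rw [hSsucc, himg, ← add_assoc, ← Set.image_add, ih, ← hLeps, hC]
  -- the convex hull is also a fixed point
  set K := convexHull ℝ A with hK
  have hKfix : Leps M ε K = K := by
    have himg : ⇑g '' K = convexHull ℝ (⇑g '' A) := by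
      have := (g : EuclideanSpace ℝ (Fin m) →ₗ[ℝ] EuclideanSpace ℝ (Fin m)).image_convexHull A
      simpa [hK] using this
    rw [hLeps, himg, hK]
    calc convexHull ℝ (⇑g '' A) + B
        = convexHull ℝ (⇑g '' A) + convexHull ℝ B := by
          rw [(convex_closedBall (0 : EuclideanSpace ℝ (Fin m)) ε).convexHull_eq]
      _ = convexHull ℝ (⇑g '' A + B) := (convexHull_add _ _).symm
      _ = convexHull ℝ (Leps M ε A) := by rw [hLeps]
      _ = convexHull ℝ A := by rw [hAfix]
  -- the norms of powers tend to zero (spectral radius argument)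
  have hcontrol : ∀ δ > 0, ∃ n, ∀ v, ‖(g ^ n) v‖ ≤ δ * ‖v‖ := by
    intro δ hδ
    set N := M.map Complex.ofReal with hN
    set T := Matrix.toEuclideanCLM (𝕜 := ℂ) N with hT
    have hspecT : spectrum ℂ T = spectrum ℂ N := by
      rw [hT]
      exact AlgEquiv.spectrum_eq (Matrix.toEuclideanCLM (𝕜 := ℂ)) N
    have hρ : spectralRadius ℂ T < 1 := by
      rcases (spectrum ℂ T).eq_empty_or_nonempty with h | h
      · rw [spectralRadius]
        simp [h]
      · obtain ⟨z, hz, hzeq⟩ := spectrum.exists_nnnorm_eq_spectralRadius_of_nonempty h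
        rw [← hzeq]
        have hz1 : ‖z‖ < 1 := hspec z (hspecT ▸ hz)
        exact_mod_cast hz1
    obtain ⟨r, hρr, hr1⟩ := ENNReal.lt_iff_exists_nnreal_btwn.mp hρ
    have hr1' : (r : ℝ) < 1 := by exact_mod_cast hr1
    have hr0 : (0 : ℝ) ≤ (r : ℝ) := r.coe_nonneg
    have hgel := spectrum.pow_nnnorm_pow_one_div_tendsto_nhds_spectralRadius T
    have hev : ∀ᶠ n : ℕ in atTop, (‖T ^ n‖₊ : ℝ≥0∞) ^ (1 / (n : ℝ)) < (r : ℝ≥0∞) :=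
      hgel.eventually_lt_const hρr
    obtain ⟨N₀, hN₀⟩ := hev.exists_forall_of_atTop
    obtain ⟨n₀, hn₀⟩ := exists_pow_lt_of_lt_one hδ hr1'
    refine ⟨max N₀ (max n₀ 1), fun v => ?_⟩
    set n := max N₀ (max n₀ 1) with hn
    have hn1 : 1 ≤ n := le_trans (le_max_right n₀ 1) (le_max_right _ _)
    have hnn0 : n₀ ≤ n := le_trans (le_max_left n₀ 1) (le_max_right _ _)
    have hne : (n : ℝ) ≠ 0 := by positivity
    have h1 : (‖T ^ n‖₊ : ℝ≥0∞) ^ (1 / (n : ℝ)) < (r : ℝ≥0∞) := hN₀ n (le_max_left _ _)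
    have h2 : (‖T ^ n‖₊ : ℝ≥0∞) < ((r ^ n : ℝ≥0) : ℝ≥0∞) := by
      calc (‖T ^ n‖₊ : ℝ≥0∞) = ((‖T ^ n‖₊ : ℝ≥0∞) ^ (1 / (n : ℝ))) ^ (n : ℝ) := by
            rw [← ENNReal.rpow_mul, one_div, inv_mul_cancel₀ hne, ENNReal.rpow_one]
        _ < (r : ℝ≥0∞) ^ (n : ℝ) := by
            apply ENNReal.rpow_lt_rpow h1
            positivity
        _ = ((r ^ n : ℝ≥0) : ℝ≥0∞) := by
            rw [ENNReal.rpow_natCast, ENNReal.coe_pow]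
    have hTn : ‖T ^ n‖ < (r : ℝ) ^ n := by
      have : ‖T ^ n‖₊ < r ^ n := by exact_mod_cast h2
      exact_mod_cast this
    have hTnδ : ‖T ^ n‖ ≤ δ := by
      have h3 : (r : ℝ) ^ n ≤ (r : ℝ) ^ n₀ := pow_le_pow_of_le_one hr0 hr1'.le hnn0
      linarith [hn₀]
    have hpow : ∀ x, (g ^ n) x = Matrix.toEuclideanLin (M ^ n) x := by
      intro x
      rw [hg, ← map_pow]
      rfl
    have hNp : N ^ n = (M ^ n).map Complex.ofReal := by
      have h := map_pow (Complex.ofRealHom.mapMatrix (m := Fin m)) M n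
      exact h.symm
    calc ‖(g ^ n) v‖ = ‖Matrix.toEuclideanLin (M ^ n) v‖ := by rw [hpow]
      _ ≤ ‖Matrix.toEuclideanCLM (𝕜 := ℂ) ((M ^ n).map Complex.ofReal)‖ * ‖v‖ :=
          norm_toEuclideanLin_le _ _
      _ = ‖T ^ n‖ * ‖v‖ := by rw [hT, ← hNp, map_pow]
      _ ≤ δ * ‖v‖ := by
          apply mul_le_mul_of_nonneg_right hTnδ (norm_nonneg v)
  -- K ⊆ A
  have hKA : K ⊆ A := by
    intro x hxK
    rw [← hAcomp.isClosed.closure_eq, Metric.mem_closure_iff]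
    intro δ hδ
    obtain ⟨R, hR⟩ := isBounded_iff_forall_norm_le.mp (isBounded_convexHull.mpr hAcomp.isBounded)
    have hR0 : 0 ≤ R := le_trans (norm_nonneg x) (hR x hxK)
    obtain ⟨a₀, ha₀⟩ := hAne
    have ha₀K : a₀ ∈ K := subset_convexHull ℝ A ha₀
    obtain ⟨n, hn⟩ := hcontrol (δ / (2 * R + 1)) (by positivity)
    have hxdec : x ∈ ⇑(g ^ n) '' K + S n := (key K hKfix n).symm ▸ hxK
    rw [Set.mem_add] at hxdec
    obtain ⟨u, hu, s, hs, hus⟩ := hxdec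
    obtain ⟨k, hk, rfl⟩ := hu
    refine ⟨(g ^ n) a₀ + s, ?_, ?_⟩
    · rw [← key A hAfix n, Set.mem_add]
      exact ⟨_, ⟨a₀, ha₀, rfl⟩, s, hs, rfl⟩
    · rw [dist_eq_norm, ← hus]
      have heq : (g ^ n) k + s - ((g ^ n) a₀ + s) = (g ^ n) (k - a₀) := by
        rw [map_sub]; abel
      rw [heq]
      have hbound : ‖k - a₀‖ ≤ 2 * R := by
        calc ‖k - a₀‖ ≤ ‖k‖ + ‖a₀‖ := norm_sub_le _ _
          _ ≤ R + R := add_le_add (hR k hk) (hR a₀ ha₀K)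
          _ = 2 * R := by ring
      calc ‖(g ^ n) (k - a₀)‖ ≤ δ / (2 * R + 1) * ‖k - a₀‖ := hn _
        _ ≤ δ / (2 * R + 1) * (2 * R) := by
            apply mul_le_mul_of_nonneg_left hbound (by positivity)
        _ < δ := by
            rw [div_mul_eq_mul_div, div_lt_iff₀ (by positivity)]
            nlinarith
  have hAK : A = K := subset_antisymm (subset_convexHull ℝ A) hKA
  rw [hAK, hK]
  exact convex_convexHull ℝ A
end
end

section
/- Let L ∈ GL(m, ℝ), ε > 0, and let A be a nonempty compact set with {L(x) + y : x ∈ A, ‖y‖ ≤ ε} = A. Then for every boundary point x ∈ ∂A there exists y ∈ L(A) with ‖x − y‖ = ε and the closed ball of radius ε about y contained in A. -/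
noncomputable section

/-- For a fixed point `A` of `L_ε`, every boundary point `x ∈ ∂A` is at distance exactly `ε`
from some `y ∈ L(A)` whose closed `ε`-ball is contained in `A`. -/
theorem stmt9 {m : ℕ} (M : Matrix (Fin m) (Fin m) ℝ) (hdet : IsUnit M.det)
    (ε : ℝ) (hε : 0 < ε) (A : Set (EuclideanSpace ℝ (Fin m)))
    (hAne : A.Nonempty) (hAcomp : IsCompact A) (hAfix : Leps M ε A = A) :
    ∀ x ∈ frontier A, ∃ y ∈ (fun v => Matrix.toEuclideanLin M v) '' A,
      ‖x - y‖ = ε ∧ Metric.closedBall y ε ⊆ A := by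
  intro x hx
  have hxA : x ∈ A := by
    have := hx.1
    rwa [hAcomp.isClosed.closure_eq] at this
  have hxL : x ∈ Leps M ε A := by rw [hAfix]; exact hxA
  obtain ⟨a, haA, y, hy, hxy⟩ := hxL
  refine ⟨Matrix.toEuclideanLin M a, ⟨a, haA, rfl⟩, ?_, ?_⟩
  · -- distance exactly ε
    have hle : ‖x - Matrix.toEuclideanLin M a‖ ≤ ε := by
      rw [hxy]; simpa using hy
    rcases lt_or_eq_of_le hle with hlt | heq
    · exfalso
      have hball : Metric.ball (Matrix.toEuclideanLin M a) ε ⊆ A := by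
        intro z hz
        rw [← hAfix]
        refine ⟨a, haA, z - Matrix.toEuclideanLin M a, ?_, by abel⟩
        have := Metric.mem_ball.mp hz
        rw [dist_eq_norm] at this
        exact this.le
      have hint : x ∈ interior A :=
        interior_maximal hball Metric.isOpen_ball
          (Metric.mem_ball.mpr (by rw [dist_eq_norm]; exact hlt))
      exact hx.2 hint
    · exact heq
  · intro z hz
    rw [← hAfix]
    refine ⟨a, haA, z - Matrix.toEuclideanLin M a, ?_, by abel⟩
    have := Metric.mem_closedBall.mp hz
    rwa [dist_eq_norm] at this
end
end

section
/- Let A ⊆ ℝ^m be a compact convex set such that for every boundary point x ∈ ∂A there exists a closed ball of radius ε > 0 contained in A whose boundary sphere contains x. Then at every boundary point of A the supporting hyperplane is unique; equivalently, ∂A is a C^1 hypersurface. -/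
open scoped RealInnerProductSpace

noncomputable section

/-- If every boundary point of the compact convex set `A` lies on the boundary sphere of a
closed `ε`-ball contained in `A`, then the supporting hyperplane (equivalently, the outward
unit normal) at every boundary point is unique. -/
theorem stmt10 {m : ℕ} (A : Set (EuclideanSpace ℝ (Fin m)))
    (hAcomp : IsCompact A) (hconv : Convex ℝ A) (ε : ℝ) (hε : 0 < ε)
    (hball : ∀ x ∈ frontier A, ∃ y : EuclideanSpace ℝ (Fin m),
      x ∈ Metric.sphere y ε ∧ Metric.closedBall y ε ⊆ A) :
    ∀ x ∈ frontier A, ∃! n : EuclideanSpace ℝ (Fin m),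
      ‖n‖ = 1 ∧ ∀ z ∈ A, ⟪z - x, n⟫ ≤ 0 := by
  intro x hx
  obtain ⟨y, hxy, hyA⟩ := hball x hx
  have hxyd : ‖x - y‖ = ε := by
    have := Metric.mem_sphere.mp hxy
    rwa [dist_eq_norm] at this
  -- Uniqueness: any supporting unit normal equals ε⁻¹ • (x - y)
  have key : ∀ n : EuclideanSpace ℝ (Fin m), ‖n‖ = 1 → (∀ z ∈ A, ⟪z - x, n⟫ ≤ 0) →
      n = ε⁻¹ • (x - y) := by
    intro n hn hsupp
    have hz : y + ε • n ∈ A := by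
      apply hyA
      simp [Metric.mem_closedBall, dist_eq_norm, norm_smul, hn, abs_of_pos hε, le_of_eq]
    have h1 : ⟪(y + ε • n) - x, n⟫ ≤ 0 := hsupp _ hz
    have hnn : ⟪n, n⟫ = (1 : ℝ) := by
      rw [real_inner_self_eq_norm_sq, hn]; norm_num
    have h1' : ⟪y - x, n⟫ + ε * ⟪n, n⟫ ≤ 0 := by
      have : ((y + ε • n) - x) = (y - x) + ε • n := by abel
      rw [this, inner_add_left, real_inner_smul_left] at h1
      linarith
    have h2 : ε ≤ ⟪x - y, n⟫ := by
      have : ⟪x - y, n⟫ = -⟪y - x, n⟫ := by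
        rw [← inner_neg_left]; congr 1; abel
      rw [this]; rw [hnn] at h1'; linarith
    have heq : ⟪x - y, n⟫ = ‖x - y‖ * ‖n‖ :=
      le_antisymm (real_inner_le_norm _ _) (by rw [hxyd, hn, mul_one]; exact h2)
    have hsmul : ‖n‖ • (x - y) = ‖x - y‖ • n := inner_eq_norm_mul_iff_real.mp heq
    rw [hn, hxyd, one_smul] at hsmul
    rw [hsmul, smul_smul, inv_mul_cancel₀ (ne_of_gt hε), one_smul]
  -- Existence via Hahn-Banach separation
  have hAclosed : IsClosed A := hAcomp.isClosed
  have hxA : x ∈ A := by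
    have := hx.1
    rwa [hAclosed.closure_eq] at this
  have hxnotint : x ∉ interior A := hx.2
  obtain ⟨f, hf⟩ := geometric_hahn_banach_open_point (hconv.interior) isOpen_interior hxnotint
  -- there is an interior point
  have hball_int : Metric.ball y ε ⊆ interior A :=
    interior_maximal (Metric.ball_subset_closedBall.trans hyA) Metric.isOpen_ball
  have ha : y ∈ interior A := hball_int (Metric.mem_ball_self hε)
  -- f z ≤ f x for all z ∈ A
  have hsupp : ∀ z ∈ A, f z ≤ f x := by
    intro z hz
    have htend : Filter.Tendsto (fun t : ℝ => f (t • y + (1 - t) • z)) (nhdsWithin 0 (Set.Ioi 0))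
        (nhds (f z)) := by
      have : Filter.Tendsto (fun t : ℝ => f (t • y + (1 - t) • z)) (nhds 0)
          (nhds (f ((0:ℝ) • y + ((1:ℝ) - 0) • z))) := by
        have hc : Continuous (fun t : ℝ => t • y + (1 - t) • z) := by fun_prop
        exact Filter.Tendsto.comp f.continuous.continuousAt (hc.tendsto 0)
      have h0 : f ((0:ℝ) • y + ((1:ℝ) - 0) • z) = f z := by norm_num
      rw [h0] at this
      exact this.mono_left nhdsWithin_le_nhds
    refine le_of_tendsto htend ?_
    filter_upwards [self_mem_nhdsWithin, Ioo_mem_nhdsGT_of_mem (by norm_num : (0:ℝ) ∈ Set.Ico 0 1)]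
      with t ht ht1
    have hint : t • y + (1 - t) • z ∈ interior A :=
      hconv.combo_interior_closure_mem_interior ha (subset_closure hz)
        ht (by linarith [ht1.2]) (by ring)
    exact (hf _ hint).le
  -- f is nonzero
  have hfy : f y < f x := hf y ha
  -- translate to inner product normal
  set v : EuclideanSpace ℝ (Fin m) := (InnerProductSpace.toDual ℝ _).symm f with hv
  have hvf : ∀ z, ⟪v, z⟫ = f z := fun z => by
    simp [hv, InnerProductSpace.toDual_symm_apply]
  have hvne : v ≠ 0 := by
    intro h
    have := hvf y
    have h2 := hvf x
    rw [h] at this h2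
    simp only [inner_zero_left] at this h2
    rw [← this] at hfy; rw [← h2] at hfy; exact lt_irrefl _ hfy
  set n₀ : EuclideanSpace ℝ (Fin m) := ‖v‖⁻¹ • v with hn₀
  have hn₀norm : ‖n₀‖ = 1 := by
    rw [hn₀, norm_smul, norm_inv, norm_norm, inv_mul_cancel₀ (norm_ne_zero_iff.mpr hvne)]
  have hn₀supp : ∀ z ∈ A, ⟪z - x, n₀⟫ ≤ 0 := by
    intro z hz
    rw [hn₀, real_inner_smul_right]
    have : ⟪z - x, v⟫ ≤ 0 := by
      rw [real_inner_comm, inner_sub_right, hvf, hvf]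
      linarith [hsupp z hz]
    have hpos : (0:ℝ) ≤ ‖v‖⁻¹ := inv_nonneg.mpr (norm_nonneg _)
    exact mul_nonpos_of_nonneg_of_nonpos hpos this
  refine ⟨n₀, ⟨hn₀norm, hn₀supp⟩, ?_⟩
  intro n' ⟨hn', hsupp'⟩
  rw [key n' hn' hsupp', key n₀ hn₀norm hn₀supp]
end
end

section
/- Let L ∈ GL(m, ℝ) have all eigenvalues of modulus less than 1, ε > 0, and let A be the unique compact fixed point of L_ε(C) := {L(x) + y : x ∈ C, ‖y‖ ≤ ε}. Then at every boundary point of A the supporting hyperplane of A is unique. -/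
open scoped RealInnerProductSpace

noncomputable section

lemma key_bound {m : ℕ} (A : Matrix (Fin m) (Fin m) ℝ) (v : EuclideanSpace ℝ (Fin m)) :
    ‖Matrix.toEuclideanLin A v‖ ≤
      ‖Matrix.toEuclideanCLM (𝕜 := ℂ) (A.map Complex.ofReal)‖ * ‖v‖ := by
  have hnorm : ∀ w : Fin m → ℝ,
      ‖(WithLp.equiv 2 (Fin m → ℂ)).symm (fun i => (w i : ℂ))‖ =
        ‖(WithLp.equiv 2 (Fin m → ℝ)).symm w‖ := by
    intro w
    rw [EuclideanSpace.norm_eq, EuclideanSpace.norm_eq]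
    congr 1
    exact Finset.sum_congr rfl fun i _ => by simp
  set w : Fin m → ℝ := WithLp.equiv 2 _ v with hw
  have hv : v = (WithLp.equiv 2 (Fin m → ℝ)).symm w := rfl
  have hmv : (Matrix.toLin' (A.map Complex.ofReal)) (fun i => (w i : ℂ)) =
      fun i => ((A.mulVec w i : ℝ) : ℂ) := by
    funext i
    simp [Matrix.toLin'_apply, Matrix.mulVec, dotProduct]
  calc ‖Matrix.toEuclideanLin A v‖
      = ‖Matrix.toEuclideanCLM (𝕜 := ℂ) (A.map Complex.ofReal)
          ((WithLp.equiv 2 (Fin m → ℂ)).symm (fun i => (w i : ℂ)))‖ := by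
        rw [(show ∀ x, Matrix.toEuclideanCLM (𝕜 := ℂ) (A.map Complex.ofReal) ((WithLp.equiv 2 (Fin m → ℂ)).symm x) = (WithLp.equiv 2 (Fin m → ℂ)).symm (Matrix.toLin' (A.map Complex.ofReal) x) from fun x => rfl), hmv, hnorm, hv,
          Matrix.toEuclideanLin_apply]
        congr 1
    _ ≤ ‖Matrix.toEuclideanCLM (𝕜 := ℂ) (A.map Complex.ofReal)‖ *
          ‖(WithLp.equiv 2 (Fin m → ℂ)).symm (fun i => (w i : ℂ))‖ :=
        ContinuousLinearMap.le_opNorm _ _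
    _ = _ := by rw [hnorm, ← hv]

lemma aux_small {m : ℕ} (hm : 0 < m) (M : Matrix (Fin m) (Fin m) ℝ) (hspec : specLt1 M)
    {δ : ℝ} (hδ : 0 < δ) :
    ∃ N : ℕ, ‖Matrix.toEuclideanCLM (𝕜 := ℂ) ((M ^ N).map Complex.ofReal)‖ ≤ δ := by
  haveI : Nonempty (Fin m) := ⟨⟨0, hm⟩⟩
  set Mc : Matrix (Fin m) (Fin m) ℂ := M.map Complex.ofReal with hMc
  set a : EuclideanSpace ℂ (Fin m) →L[ℂ] EuclideanSpace ℂ (Fin m) :=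
    Matrix.toEuclideanCLM (𝕜 := ℂ) Mc with ha
  have hspec' : spectrum ℂ a = spectrum ℂ Mc := AlgEquiv.spectrum_eq _ _
  have hrad : spectralRadius ℂ a < 1 := by
    refine spectrum.spectralRadius_lt_of_forall_lt a (r := 1) fun μ hμ => ?_
    rw [hspec'] at hμ
    exact_mod_cast (by exact_mod_cast hspec μ hμ : ‖μ‖₊ < 1)
  have hgel := spectrum.pow_nnnorm_pow_one_div_tendsto_nhds_spectralRadius a
  have hev : ∀ᶠ n : ℕ in Filter.atTop, (‖a ^ n‖₊ : ENNReal) ^ (1 / (n : ℝ)) < 1 :=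
    hgel.eventually_lt_const hrad
  obtain ⟨n, hn, hn1⟩ := (hev.and (Filter.eventually_ge_atTop 1)).exists
  have hlt : ‖a ^ n‖ < 1 := by
    by_contra h
    push_neg at h
    have h1 : (1 : ENNReal) ≤ (‖a ^ n‖₊ : ENNReal) := by
      exact_mod_cast (by exact_mod_cast h : (1 : NNReal) ≤ ‖a ^ n‖₊)
    have : (1 : ENNReal) ≤ (‖a ^ n‖₊ : ENNReal) ^ (1 / (n : ℝ)) := by
      calc (1 : ENNReal) = 1 ^ (1 / (n : ℝ)) := by rw [ENNReal.one_rpow]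
        _ ≤ _ := ENNReal.rpow_le_rpow h1 (by positivity)
    exact absurd hn (not_lt.mpr this)
  have hc0 : 0 ≤ ‖a ^ n‖ := norm_nonneg _
  obtain ⟨k, hk1, hk⟩ : ∃ k : ℕ, 1 ≤ k ∧ ‖a ^ n‖ ^ k < δ := by
    have := (tendsto_pow_atTop_nhds_zero_of_lt_one hc0 hlt).eventually_lt_const hδ
    obtain ⟨k, hk⟩ := (this.and (Filter.eventually_ge_atTop 1)).exists
    exact ⟨k, hk.2, hk.1⟩
  refine ⟨n * k, ?_⟩
  have hmap : ((M ^ (n * k)).map Complex.ofReal) = Mc ^ (n * k) := by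
    rw [hMc]
    exact
      (map_pow (Complex.ofRealHom.mapMatrix) M (n * k))
  have : Matrix.toEuclideanCLM (𝕜 := ℂ) ((M ^ (n * k)).map Complex.ofReal) = a ^ (n * k) := by
    rw [hmap, ha, map_pow]
  rw [this, pow_mul]
  calc ‖(a ^ n) ^ k‖ ≤ ‖a ^ n‖ ^ k := norm_pow_le' _ hk1
    _ ≤ δ := hk.le

set_option maxHeartbeats 1000000 in
/-- At every boundary point of the unique compact fixed point `A` of `L_ε`, the supporting
hyperplane (equivalently, the outward unit normal) is unique. -/
theorem stmt11 {m : ℕ} (M : Matrix (Fin m) (Fin m) ℝ) (hdet : IsUnit M.det)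
    (hspec : specLt1 M) (ε : ℝ) (hε : 0 < ε) (A : Set (EuclideanSpace ℝ (Fin m)))
    (hAne : A.Nonempty) (hAcomp : IsCompact A) (hAfix : Leps M ε A = A) :
    ∀ x ∈ frontier A, ∃! n : EuclideanSpace ℝ (Fin m),
      ‖n‖ = 1 ∧ ∀ z ∈ A, ⟪z - x, n⟫ ≤ 0 := by
  classical
  rcases Nat.eq_zero_or_pos m with hm | hm
  · subst hm
    haveI : Subsingleton (EuclideanSpace ℝ (Fin 0)) := ⟨fun a b => PiLp.ext fun i => i.elim0⟩
    intro x hx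
    obtain ⟨a, haA⟩ := hAne
    have hA : A = Set.univ := Set.eq_univ_of_forall fun z => (Subsingleton.elim z a) ▸ haA
    rw [hA, frontier_univ] at hx
    exact absurd hx (Set.notMem_empty x)
  set T : EuclideanSpace ℝ (Fin m) →L[ℝ] EuclideanSpace ℝ (Fin m) :=
    Matrix.toEuclideanCLM (𝕜 := ℝ) M with hT
  have hTv : ∀ (B : Matrix (Fin m) (Fin m) ℝ) (v : EuclideanSpace ℝ (Fin m)),
      Matrix.toEuclideanLin B v = Matrix.toEuclideanCLM (𝕜 := ℝ) B v := fun B v => by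
    rw [← Matrix.coe_toEuclideanCLM_eq_toEuclideanLin]; rfl
  have hTpow : ∀ (N : ℕ) (v : EuclideanSpace ℝ (Fin m)),
      (T ^ N) v = Matrix.toEuclideanLin (M ^ N) v := fun N v => by
    rw [hTv, hT, map_pow]
  -- membership characterization
  have hfix : ∀ z, z ∈ A ↔ ∃ x ∈ A, ∃ y, ‖y‖ ≤ ε ∧ z = T x + y := by
    intro z
    constructor
    · intro hz
      rw [← hAfix] at hz
      obtain ⟨u, hu, y, hy, hzz⟩ := hz
      exact ⟨u, hu, y, hy, by rw [hzz, hTv]⟩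
    · rintro ⟨u, hu, y, hy, rfl⟩
      rw [← hAfix]
      exact ⟨u, hu, y, hy, by rw [hTv]⟩
  -- smallness of powers of T
  have hsmall : ∀ δ > (0:ℝ), ∃ N : ℕ, ∀ v, ‖(T ^ N) v‖ ≤ δ * ‖v‖ := by
    intro δ hδ
    obtain ⟨N, hN⟩ := aux_small hm M hspec hδ
    refine ⟨N, fun v => ?_⟩
    rw [hTpow]
    exact (key_bound (M ^ N) v).trans
      (mul_le_mul_of_nonneg_right hN (norm_nonneg v))
  -- the convex sets S n
  let S : ℕ → Set (EuclideanSpace ℝ (Fin m)) := fun n =>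
    Nat.rec {0} (fun k Sk => {c | ∃ y, ‖y‖ ≤ ε ∧ ∃ d ∈ Sk, c = (T ^ k) y + d}) n
  have hS0 : S 0 = {0} := rfl
  have hSsucc : ∀ k, S (k + 1) = {c | ∃ y, ‖y‖ ≤ ε ∧ ∃ d ∈ S k, c = (T ^ k) y + d} :=
    fun k => rfl
  have hSconv : ∀ n, Convex ℝ (S n) := by
    intro n
    induction n with
    | zero => rw [hS0]; exact convex_singleton 0
    | succ k ih =>
      rw [hSsucc]
      rintro c₁ ⟨y₁, hy₁, d₁, hd₁, rfl⟩ c₂ ⟨y₂, hy₂, d₂, hd₂, rfl⟩ t s ht hs hts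
      refine ⟨t • y₁ + s • y₂, ?_, t • d₁ + s • d₂, ih hd₁ hd₂ ht hs hts, ?_⟩
      · calc ‖t • y₁ + s • y₂‖ ≤ ‖t • y₁‖ + ‖s • y₂‖ := norm_add_le _ _
          _ = t * ‖y₁‖ + s * ‖y₂‖ := by
            rw [norm_smul, norm_smul, Real.norm_eq_abs, Real.norm_eq_abs,
              abs_of_nonneg ht, abs_of_nonneg hs]
          _ ≤ t * ε + s * ε := by
            gcongr
          _ = ε := by rw [← add_mul, hts, one_mul]
      · simp only [map_add, map_smul, smul_add]
        abel
  -- decomposition and recomposition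
  have hP : ∀ n : ℕ, (∀ a ∈ A, ∃ a' ∈ A, ∃ c ∈ S n, a = (T ^ n) a' + c) ∧
      (∀ a' ∈ A, ∀ c ∈ S n, (T ^ n) a' + c ∈ A) := by
    intro n
    induction n with
    | zero =>
      constructor
      · intro a ha; exact ⟨a, ha, 0, rfl, by simp⟩
      · intro a' ha' c hc
        rw [hS0, Set.mem_singleton_iff] at hc
        simp only [pow_zero, ContinuousLinearMap.one_apply, hc, add_zero]
        exact ha'
    | succ k ih =>
      constructor
      · intro a ha
        obtain ⟨a', ha', c, hc, rfl⟩ := ih.1 a ha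
        obtain ⟨x, hx, y, hy, rfl⟩ := (hfix a').mp ha'
        refine ⟨x, hx, (T ^ k) y + c, ?_, ?_⟩
        · rw [hSsucc]; exact ⟨y, hy, c, hc, rfl⟩
        · rw [pow_succ]
          simp only [map_add, ContinuousLinearMap.mul_apply]
          abel
      · intro a' ha' c hc
        rw [hSsucc] at hc
        obtain ⟨y, hy, d, hd, rfl⟩ := hc
        have hmem : T a' + y ∈ A := (hfix _).mpr ⟨a', ha', y, hy, rfl⟩
        have := ih.2 _ hmem d hd
        rw [pow_succ]
        simpa only [map_add, ContinuousLinearMap.mul_apply, add_assoc] using this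
  -- A is convex
  have hAclosed : IsClosed A := hAcomp.isClosed
  obtain ⟨R, hR⟩ : ∃ R : ℝ, ∀ z ∈ A, ‖z‖ ≤ R := by
    obtain ⟨r, hr⟩ := hAcomp.isBounded.subset_closedBall 0
    exact ⟨r, fun z hz => by simpa using hr hz⟩
  have hR0 : (0:ℝ) ≤ R := le_trans (norm_nonneg _) (hR _ hAne.choose_spec)
  have hAconv : Convex ℝ A := by
    rintro a ha b hb t s ht hs hts
    rw [← hAclosed.closure_eq]
    rw [Metric.mem_closure_iff]
    intro δ hδ
    have h2R : (0:ℝ) < 3 * R + 1 := by linarith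
    obtain ⟨N, hN⟩ := hsmall (δ / (2 * (3 * R + 1))) (by positivity)
    obtain ⟨a₁, ha₁, c₁, hc₁, hadec⟩ := (hP N).1 a ha
    obtain ⟨b₁, hb₁, c₂, hc₂, hbdec⟩ := (hP N).1 b hb
    refine ⟨(T ^ N) a₁ + (t • c₁ + s • c₂), (hP N).2 a₁ ha₁ _
      (hSconv N hc₁ hc₂ ht hs hts), ?_⟩
    have ht1 : t ≤ 1 := by linarith
    have hs1 : s ≤ 1 := by linarith
    rw [dist_eq_norm]
    have heq : t • a + s • b - ((T ^ N) a₁ + (t • c₁ + s • c₂)) =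
        (T ^ N) (t • a₁ + s • b₁ - a₁) := by
      rw [hadec, hbdec]
      simp only [map_add, map_smul, map_sub, smul_add]
      abel
    rw [heq]
    calc ‖(T ^ N) (t • a₁ + s • b₁ - a₁)‖
        ≤ δ / (2 * (3 * R + 1)) * ‖t • a₁ + s • b₁ - a₁‖ := hN _
      _ ≤ δ / (2 * (3 * R + 1)) * (3 * R + 1) := by
          refine mul_le_mul_of_nonneg_left ?_ (by positivity)
          calc ‖t • a₁ + s • b₁ - a₁‖ ≤ ‖t • a₁‖ + ‖s • b₁‖ + ‖a₁‖ := by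
                refine (norm_sub_le _ _).trans ?_
                gcongr
                exact norm_add_le _ _
            _ ≤ 1 * R + 1 * R + R := by
                rw [norm_smul, norm_smul, Real.norm_eq_abs, Real.norm_eq_abs,
                  abs_of_nonneg ht, abs_of_nonneg hs]
                gcongr <;> [exact hR _ ha₁; exact hR _ hb₁; exact hR _ ha₁]
            _ ≤ 3 * R + 1 := by linarith
      _ < δ := by
          rw [div_mul_eq_mul_div, mul_comm]
          rw [div_lt_iff₀ (by positivity)]
          nlinarith
  -- interior of A is nonempty
  obtain ⟨a₀, ha₀⟩ := hAne
  have hball : Metric.ball (T a₀) ε ⊆ A := by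
    intro z hz
    refine (hfix z).mpr ⟨a₀, ha₀, z - T a₀, ?_, by abel⟩
    rw [Metric.mem_ball, dist_eq_norm] at hz
    exact hz.le
  have hint : (interior A).Nonempty :=
    ⟨T a₀, interior_maximal hball Metric.isOpen_ball (Metric.mem_ball_self hε)⟩
  -- A ⊆ closure (interior A)
  obtain ⟨w, hw⟩ := hint
  have hsubcl : A ⊆ closure (interior A) := by
    intro z hz
    have hseq : ∀ k : ℕ, (1 / ((k:ℝ) + 1)) • w + (1 - 1 / ((k:ℝ) + 1)) • z ∈ interior A := by
      intro k
      have hk : (0:ℝ) < 1 / ((k:ℝ) + 1) := by positivity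
      have hk1 : 1 / ((k:ℝ) + 1) ≤ 1 := by
        rw [div_le_one (by positivity)]; linarith
      exact hAconv.combo_interior_closure_mem_interior hw (subset_closure hz) hk
        (by linarith) (by ring)
    have htend : Filter.Tendsto
        (fun k : ℕ => (1 / ((k:ℝ) + 1)) • w + (1 - 1 / ((k:ℝ) + 1)) • z)
        Filter.atTop (nhds z) := by
      have h0 : Filter.Tendsto (fun k : ℕ => 1 / ((k:ℝ) + 1)) Filter.atTop (nhds 0) :=
        tendsto_one_div_add_atTop_nhds_zero_nat
      have h1 : Filter.Tendsto (fun k : ℕ => ((1:ℝ) - 1 / ((k:ℝ) + 1)) • z)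
          Filter.atTop (nhds z) := by
        have h1' : Filter.Tendsto (fun k : ℕ => (1:ℝ) - 1 / ((k:ℝ) + 1))
            Filter.atTop (nhds (1 - 0)) := Filter.Tendsto.const_sub 1 h0
        simpa using h1'.smul_const z
      have h2 : Filter.Tendsto (fun k : ℕ => (1 / ((k:ℝ) + 1)) • w)
          Filter.atTop (nhds ((0:ℝ) • w)) := h0.smul_const w
      simpa using h2.add h1
    exact mem_closure_of_tendsto htend (Filter.Eventually.of_forall hseq)
  -- supporting functional at x
  intro x hx
  have hxA : x ∈ A := by
    have := frontier_subset_closure hx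
    rwa [hAclosed.closure_eq] at this
  have hxnotint : x ∉ interior A := by
    exact fun h => hx.2 h
  obtain ⟨f, hf⟩ := geometric_hahn_banach_open_point (hAconv.interior) isOpen_interior hxnotint
  have hfle : ∀ z ∈ A, f z ≤ f x := by
    intro z hz
    have hclosed : IsClosed {y | f y ≤ f x} := isClosed_le f.continuous continuous_const
    have : closure (interior A) ⊆ {y | f y ≤ f x} :=
      closure_minimal (fun y hy => (hf y hy).le) hclosed
    exact this (hsubcl hz)
  set v : EuclideanSpace ℝ (Fin m) :=
    (InnerProductSpace.toDual ℝ (EuclideanSpace ℝ (Fin m))).symm f with hv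
  have hvf : ∀ u, ⟪u, v⟫ = f u := fun u => by
    rw [real_inner_comm]; exact InnerProductSpace.toDual_symm_apply
  have hvne : v ≠ 0 := by
    intro h0
    have : f w < f x := hf w hw
    have hw0 : f w = 0 := by rw [← hvf, h0, inner_zero_right]
    have hx0 : f x = 0 := by rw [← hvf, h0, inner_zero_right]
    rw [hw0, hx0] at this
    exact lt_irrefl _ this
  set n₀ : EuclideanSpace ℝ (Fin m) := ‖v‖⁻¹ • v with hn₀
  have hvnorm : (0:ℝ) < ‖v‖ := norm_pos_iff.mpr hvne
  have hn₀norm : ‖n₀‖ = 1 := by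
    rw [hn₀, norm_smul, Real.norm_eq_abs, abs_of_nonneg (by positivity),
      inv_mul_cancel₀ hvnorm.ne']
  have hn₀supp : ∀ z ∈ A, ⟪z - x, n₀⟫ ≤ 0 := by
    intro z hz
    rw [hn₀, real_inner_smul_right, inner_sub_left, hvf, hvf]
    have := hfle z hz
    have hinv : (0:ℝ) ≤ ‖v‖⁻¹ := by positivity
    nlinarith
  -- decomposition of x and uniqueness
  obtain ⟨b, hb, y, hy, hxdec⟩ := (hfix x).mp hxA
  have hyε : ‖y‖ = ε := by
    by_contra hne
    have hylt : ‖y‖ < ε := lt_of_le_of_ne hy hne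
    have hball' : Metric.ball x (ε - ‖y‖) ⊆ A := by
      intro z hz
      rw [Metric.mem_ball, dist_eq_norm] at hz
      refine (hfix z).mpr ⟨b, hb, y + (z - x), ?_, by rw [hxdec]; abel⟩
      calc ‖y + (z - x)‖ ≤ ‖y‖ + ‖z - x‖ := norm_add_le _ _
        _ ≤ ε := by linarith
    exact hxnotint (interior_maximal hball' Metric.isOpen_ball
      (Metric.mem_ball_self (by linarith)))
  have huniq : ∀ n : EuclideanSpace ℝ (Fin m),
      (‖n‖ = 1 ∧ ∀ z ∈ A, ⟪z - x, n⟫ ≤ 0) → n = ε⁻¹ • y := by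
    rintro n ⟨hn1, hnsupp⟩
    have hzmem : T b + ε • n ∈ A := by
      refine (hfix _).mpr ⟨b, hb, ε • n, ?_, rfl⟩
      rw [norm_smul, Real.norm_eq_abs, abs_of_pos hε, hn1, mul_one]
    have hineq := hnsupp _ hzmem
    have hsub : T b + ε • n - x = ε • n - y := by rw [hxdec]; abel
    rw [hsub, inner_sub_left, real_inner_smul_left, real_inner_self_eq_norm_mul_norm,
      hn1] at hineq
    have hCS : ⟪y, n⟫ ≤ ‖y‖ * ‖n‖ := real_inner_le_norm y n
    rw [hyε, hn1, mul_one] at hCS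
    have heq : ⟪y, n⟫ = ‖y‖ * ‖n‖ := by rw [hyε, hn1, mul_one]; linarith
    have := inner_eq_norm_mul_iff_real.mp heq
    rw [hn1, hyε, one_smul] at this
    rw [this, smul_smul, inv_mul_cancel₀ hε.ne', one_smul]
  refine ⟨n₀, ⟨hn₀norm, hn₀supp⟩, fun n hn => ?_⟩
  rw [huniq n hn, huniq n₀ ⟨hn₀norm, hn₀supp⟩]
end
end

section
/- Let L ∈ GL(m, ℝ) have all eigenvalues of modulus less than 1, ε > 0, and let A be the unique compact fixed point of L_ε. Then A is strictly convex: no two distinct boundary points of A admit a common outward unit normal vector. -/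
open scoped RealInnerProductSpace

noncomputable section

namespace SCAux

open Matrix Filter Topology
open scoped ENNReal NNReal

variable {m : ℕ}

lemma norm_complexify (x : EuclideanSpace ℝ (Fin m)) :
    ‖(WithLp.equiv 2 (Fin m → ℂ)).symm (fun i => ((WithLp.equiv 2 (Fin m → ℝ)) x i : ℂ))‖ = ‖x‖ := by
  rw [EuclideanSpace.norm_eq, EuclideanSpace.norm_eq]
  congr 1
  apply Finset.sum_congr rfl
  intro i _
  simp [WithLp.equiv_symm_apply]

lemma norm_toEuclideanLin_le (P : Matrix (Fin m) (Fin m) ℝ) (x : EuclideanSpace ℝ (Fin m)) :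
    ‖Matrix.toEuclideanLin P x‖ ≤ ‖Matrix.toEuclideanCLM (𝕜 := ℂ) (P.map Complex.ofReal)‖ * ‖x‖ := by
  set v : Fin m → ℝ := (WithLp.equiv 2 (Fin m → ℝ)) x with hv
  set xc : EuclideanSpace ℂ (Fin m) := (WithLp.equiv 2 (Fin m → ℂ)).symm (fun i => (v i : ℂ)) with hxc
  have h1 : ‖xc‖ = ‖x‖ := norm_complexify x
  have h2 : ‖Matrix.toEuclideanCLM (𝕜 := ℂ) (P.map Complex.ofReal) xc‖
      = ‖Matrix.toEuclideanLin P x‖ := by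
    rw [hxc, WithLp.equiv_symm_apply, Matrix.toEuclideanCLM_toLp]
    have hmv : ((P.map Complex.ofReal) *ᵥ (fun i => (v i : ℂ))) = fun j => ((P *ᵥ v) j : ℂ) := by
      funext j
      simp [Matrix.mulVec, dotProduct, Matrix.map_apply]
    rw [hmv]
    rw [Matrix.toEuclideanLin_apply P x]
    rw [EuclideanSpace.norm_eq, EuclideanSpace.norm_eq]
    congr 1
    apply Finset.sum_congr rfl
    intro i _
    simp [WithLp.equiv_symm_apply, hv, WithLp.equiv_apply]
  rw [← h2, ← h1]
  exact (Matrix.toEuclideanCLM (𝕜 := ℂ) (P.map Complex.ofReal)).le_opNorm xc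

lemma decay (M : Matrix (Fin m) (Fin m) ℝ) (hm : 0 < m) (hspec : specLt1 M) :
    Tendsto (fun k : ℕ => ‖(Matrix.toEuclideanCLM (𝕜 := ℂ) (M.map Complex.ofReal)) ^ k‖)
      atTop (𝓝 0) := by
  set Tc := Matrix.toEuclideanCLM (𝕜 := ℂ) (M.map Complex.ofReal) with hTc
  haveI : Nonempty (Fin m) := Fin.pos_iff_nonempty.mp hm
  haveI : Nontrivial (EuclideanSpace ℂ (Fin m)) := by
    refine ⟨0, EuclideanSpace.single ⟨0, hm⟩ 1, fun h => ?_⟩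
    have := congrArg (fun f => f ⟨0, hm⟩) h
    simp at this
  haveI : Nontrivial (EuclideanSpace ℂ (Fin m) →L[ℂ] EuclideanSpace ℂ (Fin m)) := by
    obtain ⟨v, hv⟩ := exists_ne (0 : EuclideanSpace ℂ (Fin m))
    exact ⟨0, 1, fun h => hv (by simpa using (congrArg (fun f => f v) h).symm)⟩
  have hrad : spectralRadius ℂ Tc < 1 := by
    obtain ⟨z, hz, hz2⟩ := spectrum.exists_nnnorm_eq_spectralRadius Tc
    rw [← hz2]
    have hz' : z ∈ spectrum ℂ (M.map Complex.ofReal) := by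
      rwa [hTc, AlgEquiv.spectrum_eq] at hz
    have := hspec z hz'
    rw [← ENNReal.coe_one, ENNReal.coe_lt_coe]
    rwa [← norm_toNNReal, ← Real.toNNReal_one, Real.toNNReal_lt_toNNReal_iff one_pos]
  have gelfand := spectrum.pow_nnnorm_pow_one_div_tendsto_nhds_spectralRadius Tc
  obtain ⟨r, hρr, hr1⟩ := ENNReal.lt_iff_exists_nnreal_btwn.mp hrad
  have hr1' : (r : ℝ) < 1 := by exact_mod_cast hr1
  have hev : ∀ᶠ k : ℕ in atTop, (‖Tc ^ k‖₊ : ℝ≥0∞) ^ (1 / (k : ℝ)) < (r : ℝ≥0∞) :=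
    gelfand.eventually_lt_const hρr
  have hev2 : ∀ᶠ k : ℕ in atTop, ‖Tc ^ k‖ ≤ (r : ℝ) ^ k := by
    filter_upwards [hev, eventually_ge_atTop 1] with k hk hk1
    have hk0 : (k : ℝ) ≠ 0 := by positivity
    have h1 : ((‖Tc ^ k‖₊ : ℝ≥0∞) ^ (1 / (k : ℝ))) ^ (k : ℝ) ≤ (r : ℝ≥0∞) ^ (k : ℝ) :=
      ENNReal.rpow_le_rpow hk.le (by positivity)
    rw [← ENNReal.rpow_mul, one_div_mul_cancel hk0, ENNReal.rpow_one] at h1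
    rw [ENNReal.rpow_natCast] at h1
    rw [← ENNReal.coe_pow, ENNReal.coe_le_coe] at h1
    calc ‖Tc ^ k‖ = ((‖Tc ^ k‖₊ : ℝ≥0) : ℝ) := rfl
      _ ≤ ((r ^ k : ℝ≥0) : ℝ) := by exact_mod_cast h1
      _ = (r : ℝ) ^ k := by push_cast; ring
  exact squeeze_zero' (Eventually.of_forall fun k => norm_nonneg _) hev2
    (tendsto_pow_atTop_nhds_zero_of_lt_one r.coe_nonneg hr1')

/-- Extraction step: a supported point of `A` pulls back through `L_ε`. -/
lemma extract (M : Matrix (Fin m) (Fin m) ℝ) (ε : ℝ) (hε : 0 < ε)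
    (A : Set (EuclideanSpace ℝ (Fin m))) (hAfix : Leps M ε A = A)
    {a n : EuclideanSpace ℝ (Fin m)} (ha : a ∈ A) (hn : ‖n‖ = 1)
    (hsa : ∀ z ∈ A, ⟪z - a, n⟫ ≤ 0) :
    ∃ a' ∈ A, a = Matrix.toEuclideanCLM (𝕜 := ℝ) M a' + ε • n ∧
      ∀ c ∈ A, ⟪Matrix.toEuclideanCLM (𝕜 := ℝ) M c - Matrix.toEuclideanCLM (𝕜 := ℝ) M a', n⟫ ≤ 0 := by
  set Tr := Matrix.toEuclideanCLM (𝕜 := ℝ) M with hTr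
  have claim1 : ∀ c ∈ A, ⟪Tr c, n⟫ + ε ≤ ⟪a, n⟫ := by
    intro c hc
    have hmem : Tr c + ε • n ∈ A := by
      rw [← hAfix]
      exact ⟨c, hc, ε • n, by rw [norm_smul, hn, mul_one]; rw [Real.norm_eq_abs, abs_of_pos hε],
        rfl⟩
    have h := hsa _ hmem
    rw [inner_sub_left, inner_add_left, real_inner_smul_left, real_inner_self_eq_norm_sq, hn] at h
    linarith
  have ha' : a ∈ Leps M ε A := by rw [hAfix]; exact ha
  obtain ⟨a', ha'A, u, hu, hau⟩ := ha'
  have hau' : a = Tr a' + u := hau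
  have h2 : ε ≤ ⟪u, n⟫ := by
    have h := claim1 a' ha'A
    rw [hau', inner_add_left] at h
    linarith
  have hcs : ⟪u, n⟫ ≤ ε := by
    calc ⟪u, n⟫ ≤ ‖u‖ * ‖n‖ := real_inner_le_norm u n
      _ ≤ ε := by rw [hn, mul_one]; exact hu
  have hun : u = ε • n := by
    have h0 : ‖u - ε • n‖ ^ 2 ≤ 0 := by
      rw [norm_sub_sq_real, real_inner_smul_right, norm_smul, hn, mul_one, Real.norm_eq_abs,
        abs_of_pos hε]
      nlinarith [norm_nonneg u]
    have h1 : ‖u - ε • n‖ = 0 := by nlinarith [norm_nonneg (u - ε • n)]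
    rw [← sub_eq_zero]
    exact norm_eq_zero.mp h1
  refine ⟨a', ha'A, by rw [hau', hun], fun c hc => ?_⟩
  have h := claim1 c hc
  have haeq : ⟪a, n⟫ = ⟪Tr a', n⟫ + ε := by
    rw [hau', hun, inner_add_left, real_inner_smul_left, real_inner_self_eq_norm_sq, hn]
    ring
  rw [inner_sub_left]
  linarith [h, haeq]

/-- The key inductive step. -/
lemma step (M : Matrix (Fin m) (Fin m) ℝ) (hdet : IsUnit M.det) (ε : ℝ) (hε : 0 < ε)
    (A : Set (EuclideanSpace ℝ (Fin m))) (hAfix : Leps M ε A = A)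
    {a b n : EuclideanSpace ℝ (Fin m)} (ha : a ∈ A) (hb : b ∈ A) (hn : ‖n‖ = 1)
    (hsa : ∀ z ∈ A, ⟪z - a, n⟫ ≤ 0) (hsb : ∀ z ∈ A, ⟪z - b, n⟫ ≤ 0) :
    ∃ a' ∈ A, ∃ b' ∈ A, ∃ n' : EuclideanSpace ℝ (Fin m), ‖n'‖ = 1 ∧
      (∀ z ∈ A, ⟪z - a', n'⟫ ≤ 0) ∧ (∀ z ∈ A, ⟪z - b', n'⟫ ≤ 0) ∧
      a - b = Matrix.toEuclideanCLM (𝕜 := ℝ) M (a' - b') := by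
  set Tr := Matrix.toEuclideanCLM (𝕜 := ℝ) M with hTr
  obtain ⟨a', ha'A, haeq, hsupa⟩ := extract M ε hε A hAfix ha hn hsa
  obtain ⟨b', hb'A, hbeq, hsupb⟩ := extract M ε hε A hAfix hb hn hsb
  set w : EuclideanSpace ℝ (Fin m) := ContinuousLinearMap.adjoint Tr n with hw
  have hadj : ∀ d : EuclideanSpace ℝ (Fin m), ⟪d, w⟫ = ⟪Tr d, n⟫ := fun d =>
    ContinuousLinearMap.adjoint_inner_right Tr d n
  have hwne : w ≠ 0 := by
    intro h0
    have hsurj : ∃ d, Tr d = n := by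
      refine ⟨Matrix.toEuclideanCLM (𝕜 := ℝ) M⁻¹ n, ?_⟩
      have hmul : Tr * Matrix.toEuclideanCLM (𝕜 := ℝ) M⁻¹ = 1 := by
        rw [hTr, ← _root_.map_mul, Matrix.mul_nonsing_inv _ hdet, _root_.map_one]
      calc Tr (Matrix.toEuclideanCLM (𝕜 := ℝ) M⁻¹ n)
          = (Tr * Matrix.toEuclideanCLM (𝕜 := ℝ) M⁻¹) n := rfl
        _ = n := by rw [hmul]; rfl
    obtain ⟨d, hd⟩ := hsurj
    have h : ⟪n, n⟫ = (0 : ℝ) := by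
      have h := hadj d
      rw [h0, inner_zero_right, hd] at h
      exact h.symm
    rw [real_inner_self_eq_norm_sq, hn] at h
    norm_num at h
  refine ⟨a', ha'A, b', hb'A, ‖w‖⁻¹ • w, norm_smul_inv_norm hwne, ?_, ?_, ?_⟩
  · intro z hz
    rw [real_inner_smul_right]
    have h1 : ⟪z - a', w⟫ ≤ 0 := by
      rw [hadj, map_sub]
      exact hsupa z hz
    have h2 : (0 : ℝ) ≤ ‖w‖⁻¹ := by positivity
    exact mul_nonpos_of_nonneg_of_nonpos h2 h1
  · intro z hz
    rw [real_inner_smul_right]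
    have h1 : ⟪z - b', w⟫ ≤ 0 := by
      rw [hadj, map_sub]
      exact hsupb z hz
    have h2 : (0 : ℝ) ≤ ‖w‖⁻¹ := by positivity
    exact mul_nonpos_of_nonneg_of_nonpos h2 h1
  · rw [haeq, hbeq, map_sub]
    abel

end SCAux

/-- The unique compact fixed point `A` of `L_ε` is strictly convex: no two distinct boundary
points admit a common outward unit normal. -/
theorem stmt12 {m : ℕ} (M : Matrix (Fin m) (Fin m) ℝ) (hdet : IsUnit M.det)
    (hspec : specLt1 M) (ε : ℝ) (hε : 0 < ε) (A : Set (EuclideanSpace ℝ (Fin m)))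
    (hAne : A.Nonempty) (hAcomp : IsCompact A) (hAfix : Leps M ε A = A) :
    ∀ x ∈ frontier A, ∀ y ∈ frontier A, ∀ n : EuclideanSpace ℝ (Fin m), ‖n‖ = 1 →
      (∀ z ∈ A, ⟪z - x, n⟫ ≤ 0) → (∀ z ∈ A, ⟪z - y, n⟫ ≤ 0) → x = y := by
  intro x hx y hy n hn hsx hsy
  rcases Nat.eq_zero_or_pos m with hm | hm
  · haveI : Subsingleton (EuclideanSpace ℝ (Fin m)) := by
      subst hm; infer_instance
    exact Subsingleton.elim x y
  have hxA : x ∈ A := hAcomp.isClosed.frontier_subset hx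
  have hyA : y ∈ A := hAcomp.isClosed.frontier_subset hy
  set Tr := Matrix.toEuclideanCLM (𝕜 := ℝ) M with hTr
  have key : ∀ k : ℕ, ∃ a ∈ A, ∃ b ∈ A, ∃ n' : EuclideanSpace ℝ (Fin m), ‖n'‖ = 1 ∧
      (∀ z ∈ A, ⟪z - a, n'⟫ ≤ 0) ∧ (∀ z ∈ A, ⟪z - b, n'⟫ ≤ 0) ∧
      x - y = (Tr ^ k) (a - b) := by
    intro k
    induction k with
    | zero => exact ⟨x, hxA, y, hyA, n, hn, hsx, hsy, by simp⟩
    | succ k ih =>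
      obtain ⟨a, haA, b, hbA, n', hn', hsa, hsb, heq⟩ := ih
      obtain ⟨a', ha'A, b', hb'A, n'', hn'', hsa', hsb', hstep⟩ :=
        SCAux.step M hdet ε hε A hAfix haA hbA hn' hsa hsb
      refine ⟨a', ha'A, b', hb'A, n'', hn'', hsa', hsb', ?_⟩
      rw [heq, hstep, pow_succ, ContinuousLinearMap.mul_apply]
  obtain ⟨D, hD⟩ := Metric.isBounded_iff.mp hAcomp.isBounded
  set Tc := Matrix.toEuclideanCLM (𝕜 := ℂ) (M.map Complex.ofReal) with hTc
  have hbound : ∀ k : ℕ, ‖x - y‖ ≤ ‖Tc ^ k‖ * D := by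
    intro k
    obtain ⟨a, haA, b, hbA, n', hn', hsa, hsb, heq⟩ := key k
    have h1 : (Tr ^ k) (a - b) = Matrix.toEuclideanLin (M ^ k) (a - b) := by
      rw [hTr, ← map_pow]
      rfl
    have h2 : ‖Matrix.toEuclideanLin (M ^ k) (a - b)‖
        ≤ ‖Matrix.toEuclideanCLM (𝕜 := ℂ) ((M ^ k).map Complex.ofReal)‖ * ‖a - b‖ :=
      SCAux.norm_toEuclideanLin_le (M ^ k) (a - b)
    have h3 : (M ^ k).map Complex.ofReal = (M.map Complex.ofReal) ^ k := by
      have := map_pow (Complex.ofRealHom.mapMatrix) M k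
      simp only [RingHom.mapMatrix_apply] at this; exact this
    have h4 : ‖a - b‖ ≤ D := by
      rw [← dist_eq_norm]
      exact hD haA hbA
    calc ‖x - y‖ = ‖Matrix.toEuclideanLin (M ^ k) (a - b)‖ := by rw [heq, h1]
      _ ≤ ‖Matrix.toEuclideanCLM (𝕜 := ℂ) ((M ^ k).map Complex.ofReal)‖ * ‖a - b‖ := h2
      _ = ‖Tc ^ k‖ * ‖a - b‖ := by rw [h3, hTc, map_pow]
      _ ≤ ‖Tc ^ k‖ * D := by
          exact mul_le_mul_of_nonneg_left h4 (norm_nonneg _)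
  have hlim : Filter.Tendsto (fun k : ℕ => ‖Tc ^ k‖ * D) Filter.atTop (nhds 0) := by
    have h := (SCAux.decay M hm hspec).mul_const D
    rw [zero_mul] at h
    exact h
  have hle : ‖x - y‖ ≤ 0 := ge_of_tendsto' hlim hbound
  have : x - y = 0 := norm_le_zero_iff.mp hle
  exact sub_eq_zero.mp this
end
end
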